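/- Let (X, μ) be a σ-finite measure space, let (U_t)_{t ≥ 0} be a strongly continuous one-parameter semigroup of stochastic operators on L¹_ℝ(X,μ) (U_0 = id, U_{s+t} = U_s ∘ U_t, and t ↦ U_t g is continuous in L¹-norm for each g), and let O ∈ L∞_ℝ(X,μ). Then the following are equivalent: (i) U_t(O·g) = O·U_t(g) for all t ≥ 0 and all g ∈ L¹_ℝ(X,μ); (ii) for every probability distribution g (g ∈ L¹, g ≥ 0 a.e., ∫ g dμ = 1), the functions t ↦ ∫ O·(U_t g) dμ and t ↦ ∫ O²·(U_t g) dμ are constant on [0,∞); (iii) for every g ∈ L¹_ℝ(X,μ), both (∫ O·(U_t g) dμ − ∫ O·g dμ)/t → 0 and (∫ O²·(U_t g) dμ − ∫ O²·g dμ)/t → 0 as t → 0+. -/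

import Mathlib

open MeasureTheory Filter Topology

private lemma quad_nonneg_real {a b c : ℝ} (h : ∀ q : ℚ, 0 ≤ (q : ℝ)^2 * a - 2*q*b + c) :
    ∀ r : ℝ, 0 ≤ r^2*a - 2*r*b + c := by
  intro r
  have hc : Continuous fun r : ℝ => r^2*a - 2*r*b + c := by continuity
  have hclosed : IsClosed {r : ℝ | 0 ≤ r^2*a - 2*r*b + c} := isClosed_le continuous_const hc
  have hsub : Set.range ((↑) : ℚ → ℝ) ⊆ {r : ℝ | 0 ≤ r^2*a - 2*r*b + c} := by
    rintro _ ⟨q, rfl⟩; exact h q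
  exact hclosed.closure_subset_iff.mpr hsub
    (by rw [Rat.denseRange_cast.closure_range]; trivial)

private lemma quad_min {a b c o : ℝ} (ha : 0 ≤ a)
    (h : ∀ r : ℝ, 0 ≤ r^2*a - 2*r*b + c) (h0 : o^2*a - 2*o*b + c = 0) :
    b = o * a := by
  have h2 : ∀ ε : ℝ, 0 ≤ ε^2*a - 2*ε*(o*a - b) := by
    intro ε
    have := h (o - ε)
    nlinarith [this, h0]
  have ha1 : (0:ℝ) < a + 1 := by linarith
  set e := (o*a - b) / (a+1) with hee
  have hd2 : e * (a + 1) = o*a - b := div_mul_cancel₀ _ ha1.ne'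
  have h3 := h2 e
  have hed : e * (o*a - b) = e^2 * (a+1) := by rw [← hd2]; ring
  have he2 : e^2 * (a + 2) ≤ 0 := by nlinarith [h3, hed]
  have he0 : e = 0 := by nlinarith [sq_nonneg e]
  have : o*a - b = 0 := by rw [← hd2, he0]; ring
  linarith

set_option maxHeartbeats 2000000 in
/-- **Noether-type theorem for Markov processes, continuous case (Baez–Fong).**
Let `(X, μ)` be a σ-finite measure space, `(U_t)_{t ≥ 0}` a strongly continuous
one-parameter semigroup of stochastic operators on `L¹(X, μ; ℝ)`, `O ∈ L∞(X, μ; ℝ)` an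
observable, and `MO` the multiplication operator by `O` on `L¹`. Then the following are
equivalent:
(i) every `U_t` commutes with multiplication by `O`;
(ii) for every probability distribution `g`, the expected values of `O` and `O²` with
respect to `U_t g` are constant in `t ≥ 0`;
(iii) for every `g ∈ L¹`, the difference quotients at `t = 0⁺` of the expected values of
`O` and of `O²` vanish (`O` and `O²` lie in the kernel of the weak-* infinitesimal
generator of the dual semigroup). -/
theorem stochastic_semigroup_commutes_iff_expected_values_invariant
    {X : Type*} [MeasurableSpace X] (μ : Measure X) [SigmaFinite μ]
    (U : ℝ → (Lp ℝ 1 μ →L[ℝ] Lp ℝ 1 μ))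
    (h0 : U 0 = ContinuousLinearMap.id ℝ (Lp ℝ 1 μ))
    (hsemi : ∀ s t : ℝ, 0 ≤ s → 0 ≤ t → U (s + t) = (U s).comp (U t))
    (hUpos : ∀ t : ℝ, 0 ≤ t →
      ∀ g : Lp ℝ 1 μ, 0 ≤ᵐ[μ] (⇑g : X → ℝ) → 0 ≤ᵐ[μ] (⇑(U t g) : X → ℝ))
    (hUint : ∀ t : ℝ, 0 ≤ t → ∀ g : Lp ℝ 1 μ, ∫ x, U t g x ∂μ = ∫ x, g x ∂μ)
    (hcont : ∀ g : Lp ℝ 1 μ, ContinuousOn (fun t : ℝ => U t g) (Set.Ici 0))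
    (O : Lp ℝ ⊤ μ)
    (MO : Lp ℝ 1 μ →L[ℝ] Lp ℝ 1 μ)
    (hMO : ∀ g : Lp ℝ 1 μ, (⇑(MO g) : X → ℝ) =ᵐ[μ] fun x => O x * g x) :
    List.TFAE
      [∀ t : ℝ, 0 ≤ t → ∀ g : Lp ℝ 1 μ, U t (MO g) = MO (U t g),
       ∀ g : Lp ℝ 1 μ, 0 ≤ᵐ[μ] (⇑g : X → ℝ) → ∫ x, g x ∂μ = 1 →
         ∀ t : ℝ, 0 ≤ t →
           (∫ x, O x * U t g x ∂μ = ∫ x, O x * g x ∂μ ∧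
            ∫ x, O x * O x * U t g x ∂μ = ∫ x, O x * O x * g x ∂μ),
       ∀ g : Lp ℝ 1 μ,
         Tendsto (fun t : ℝ => t⁻¹ * (∫ x, O x * U t g x ∂μ - ∫ x, O x * g x ∂μ))
           (𝓝[>] (0 : ℝ)) (𝓝 0) ∧
         Tendsto
           (fun t : ℝ => t⁻¹ * (∫ x, O x * O x * U t g x ∂μ - ∫ x, O x * O x * g x ∂μ))
           (𝓝[>] (0 : ℝ)) (𝓝 0)] := by
  -- basic facts
  have hint : ∀ h : Lp ℝ 1 μ, Integrable (⇑h) μ := fun h => L1.integrable_coeFn h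
  have hMO2 : ∀ h : Lp ℝ 1 μ, (⇑(MO (MO h)) : X → ℝ) =ᵐ[μ] fun x => O x * O x * h x := by
    intro h
    filter_upwards [hMO (MO h), hMO h] with x e1 e2
    rw [e1, e2]; ring
  have hΦeq : ∀ h : Lp ℝ 1 μ, ∫ x, O x * h x ∂μ = ∫ x, (MO h : X → ℝ) x ∂μ :=
    fun h => (integral_congr_ae (hMO h)).symm
  have hΨeq : ∀ h : Lp ℝ 1 μ, ∫ x, O x * O x * h x ∂μ = ∫ x, (MO (MO h) : X → ℝ) x ∂μ :=
    fun h => (integral_congr_ae (hMO2 h)).symm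
  have hIsub : ∀ a b : Lp ℝ 1 μ, ∫ x, (a - b : Lp ℝ 1 μ) x ∂μ = ∫ x, a x ∂μ - ∫ x, b x ∂μ := by
    intro a b
    rw [integral_congr_ae (Lp.coeFn_sub a b)]
    exact integral_sub (hint a) (hint b)
  have hIsmul : ∀ (r : ℝ) (a : Lp ℝ 1 μ), ∫ x, (r • a : Lp ℝ 1 μ) x ∂μ = r * ∫ x, a x ∂μ := by
    intro r a
    rw [integral_congr_ae (Lp.coeFn_smul r a)]
    simpa using integral_smul r (⇑a)
  -- positive/negative part decomposition
  have hposnn : ∀ g : Lp ℝ 1 μ, 0 ≤ᵐ[μ] (⇑(Lp.posPart g) : X → ℝ) := by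
    intro g
    filter_upwards [Lp.coeFn_posPart g] with x hx
    rw [hx]; exact le_max_right _ _
  have hnegnn : ∀ g : Lp ℝ 1 μ, 0 ≤ᵐ[μ] (⇑(Lp.negPart g) : X → ℝ) := by
    intro g
    filter_upwards [Lp.coeFn_negPart g] with x hx
    rw [hx]; simp [le_neg]
  have hdecomp : ∀ g : Lp ℝ 1 μ, Lp.posPart g - Lp.negPart g = g := by
    intro g
    apply Lp.ext
    filter_upwards [Lp.coeFn_sub (Lp.posPart g) (Lp.negPart g), Lp.coeFn_posPart g,
      Lp.coeFn_negPart g] with x e1 e2 e3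
    simp only [Pi.sub_apply] at e1
    rw [e1, e2, e3]
    have := max_add_min (g x) 0
    linarith
  -- key A : extended invariance of expectations at time t implies commutation at time t
  have keyA : ∀ t : ℝ, 0 ≤ t →
      (∀ g : Lp ℝ 1 μ, (∫ x, (MO (U t g) : X → ℝ) x ∂μ = ∫ x, (MO g : X → ℝ) x ∂μ ∧
        ∫ x, (MO (MO (U t g)) : X → ℝ) x ∂μ = ∫ x, (MO (MO g) : X → ℝ) x ∂μ)) →
      ∀ g : Lp ℝ 1 μ, U t (MO g) = MO (U t g) := by
    intro t ht hP
    have nn : ∀ g : Lp ℝ 1 μ, 0 ≤ᵐ[μ] (⇑g : X → ℝ) → U t (MO g) = MO (U t g) := by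
      intro g hg
      have hq : ∀ q : ℚ, 0 ≤ᵐ[μ] fun x =>
          (q:ℝ)^2 * (U t g) x - 2*(q:ℝ)*(U t (MO g)) x + (U t (MO (MO g))) x := by
        intro q
        set v : Lp ℝ 1 μ := MO (MO g) - (2*(q:ℝ)) • MO g + ((q:ℝ)^2) • g with hv
        have hvnn : 0 ≤ᵐ[μ] (⇑v : X → ℝ) := by
          filter_upwards [Lp.coeFn_add (MO (MO g) - (2*(q:ℝ)) • MO g) (((q:ℝ)^2) • g),
            Lp.coeFn_sub (MO (MO g)) ((2*(q:ℝ)) • MO g),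
            Lp.coeFn_smul (2*(q:ℝ)) (MO g), Lp.coeFn_smul ((q:ℝ)^2) g,
            hMO g, hMO2 g, hg] with x e1 e2 e3 e4 e5 e6 e7
          simp only [Pi.add_apply, Pi.sub_apply, Pi.smul_apply, smul_eq_mul] at e1 e2 e3 e4
          have hval : (⇑v : X → ℝ) x = ((O x) - (q:ℝ))^2 * g x := by
            rw [hv]; rw [e1, e2, e3, e4, e5, e6]; ring
          rw [Pi.zero_apply, hval]
          exact mul_nonneg (sq_nonneg _) e7
        have hUv := hUpos t ht v hvnn
        have hUveq : (⇑(U t v) : X → ℝ) =ᵐ[μ] fun x =>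
            (q:ℝ)^2 * (U t g) x - 2*(q:ℝ)*(U t (MO g)) x + (U t (MO (MO g))) x := by
          rw [hv, map_add, map_sub, _root_.map_smul, _root_.map_smul]
          filter_upwards [Lp.coeFn_add (U t (MO (MO g)) - (2*(q:ℝ)) • U t (MO g))
              (((q:ℝ)^2) • U t g),
            Lp.coeFn_sub (U t (MO (MO g))) ((2*(q:ℝ)) • U t (MO g)),
            Lp.coeFn_smul (2*(q:ℝ)) (U t (MO g)), Lp.coeFn_smul ((q:ℝ)^2) (U t g)]
            with x e1 e2 e3 e4
          simp only [Pi.add_apply, Pi.sub_apply, Pi.smul_apply, smul_eq_mul] at e1 e2 e3 e4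
          rw [e1, e2, e3, e4]; ring
        filter_upwards [hUv, hUveq] with x h1 h2
        rw [← h2]; simpa using h1
      have hqall : ∀ᵐ x ∂μ, ∀ q : ℚ, 0 ≤
          (q:ℝ)^2 * (U t g) x - 2*(q:ℝ)*(U t (MO g)) x + (U t (MO (MO g))) x := by
        rw [ae_all_iff]
        intro q
        filter_upwards [hq q] with x hx
        simpa using hx
      have hreal : ∀ᵐ x ∂μ, ∀ r : ℝ, 0 ≤
          r^2 * (U t g) x - 2*r*(U t (MO g)) x + (U t (MO (MO g))) x := by
        filter_upwards [hqall] with x hx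
        exact quad_nonneg_real hx
      have hw_nonneg : 0 ≤ᵐ[μ] fun x =>
          O x * O x * (U t g) x - 2*(O x * (U t (MO g)) x) + (U t (MO (MO g))) x := by
        filter_upwards [hreal] with x hx
        rw [Pi.zero_apply]
        nlinarith [hx (O x)]
      have hw_int : Integrable (fun x =>
          O x * O x * (U t g) x - 2*(O x * (U t (MO g)) x) + (U t (MO (MO g))) x) μ := by
        apply Integrable.add
        · apply Integrable.sub
          · exact (hint (MO (MO (U t g)))).congr (hMO2 (U t g))
          · exact ((hint (MO (U t (MO g)))).congr (hMO (U t (MO g)))).const_mul 2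
        · exact hint (U t (MO (MO g)))
      have hw_zero : ∫ x, (O x * O x * (U t g) x - 2*(O x * (U t (MO g)) x)
          + (U t (MO (MO g))) x) ∂μ = 0 := by
        rw [integral_add (by
            exact ((hint (MO (MO (U t g)))).congr (hMO2 (U t g))).sub
              (((hint (MO (U t (MO g)))).congr (hMO (U t (MO g)))).const_mul 2))
          (hint (U t (MO (MO g)))),
          integral_sub ((hint (MO (MO (U t g)))).congr (hMO2 (U t g)))
            (((hint (MO (U t (MO g)))).congr (hMO (U t (MO g)))).const_mul 2)]
        have e1 : ∫ x, O x * O x * (U t g) x ∂μ = ∫ x, (MO (MO g) : X → ℝ) x ∂μ := by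
          rw [hΨeq (U t g)]; exact (hP g).2
        have e2 : ∫ x, 2*(O x * (U t (MO g)) x) ∂μ = 2 * ∫ x, (MO (MO g) : X → ℝ) x ∂μ := by
          rw [integral_const_mul]
          congr 1
          rw [hΦeq (U t (MO g))]; exact (hP (MO g)).1
        have e3 : ∫ x, (U t (MO (MO g))) x ∂μ = ∫ x, (MO (MO g) : X → ℝ) x ∂μ :=
          hUint t ht (MO (MO g))
        rw [e1, e2, e3]; ring
      have hw0 := (integral_eq_zero_iff_of_nonneg_ae hw_nonneg hw_int).mp hw_zero
      have hb : (⇑(U t (MO g)) : X → ℝ) =ᵐ[μ] fun x => O x * (U t g) x := by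
        filter_upwards [hreal, hw0, hUpos t ht g hg] with x h1 h2 h3
        simp only [Pi.zero_apply] at h2 h3
        exact quad_min h3 h1 (by nlinarith [h2])
      exact Lp.ext (hb.trans (hMO (U t g)).symm)
    intro g
    conv_lhs => rw [← hdecomp g]
    conv_rhs => rw [← hdecomp g]
    simp only [map_sub]
    rw [nn _ (hposnn g), nn _ (hnegnn g)]
  -- key B : (ii) implies extended invariance
  have keyB : (∀ g : Lp ℝ 1 μ, 0 ≤ᵐ[μ] (⇑g : X → ℝ) → ∫ x, g x ∂μ = 1 →
        ∀ t : ℝ, 0 ≤ t →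
          (∫ x, O x * U t g x ∂μ = ∫ x, O x * g x ∂μ ∧
           ∫ x, O x * O x * U t g x ∂μ = ∫ x, O x * O x * g x ∂μ)) →
      ∀ t : ℝ, 0 ≤ t → ∀ g : Lp ℝ 1 μ,
        (∫ x, (MO (U t g) : X → ℝ) x ∂μ = ∫ x, (MO g : X → ℝ) x ∂μ ∧
         ∫ x, (MO (MO (U t g)) : X → ℝ) x ∂μ = ∫ x, (MO (MO g) : X → ℝ) x ∂μ) := by
    intro h2 t ht
    have nn : ∀ g : Lp ℝ 1 μ, 0 ≤ᵐ[μ] (⇑g : X → ℝ) →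
        (∫ x, (MO (U t g) : X → ℝ) x ∂μ = ∫ x, (MO g : X → ℝ) x ∂μ ∧
         ∫ x, (MO (MO (U t g)) : X → ℝ) x ∂μ = ∫ x, (MO (MO g) : X → ℝ) x ∂μ) := by
      intro g hg
      rcases eq_or_lt_of_le (integral_nonneg_of_ae hg) with hz | hpos
      · have hg0 : (⇑g : X → ℝ) =ᵐ[μ] 0 :=
          (integral_eq_zero_iff_of_nonneg_ae hg (hint g)).mp hz.symm
        have hgz : g = 0 := Lp.ext (hg0.trans (Lp.coeFn_zero ℝ 1 μ).symm)
        rw [hgz]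
        simp
      · set c := ∫ x, g x ∂μ with hc
        have hnn : 0 ≤ᵐ[μ] (⇑(c⁻¹ • g) : X → ℝ) := by
          filter_upwards [Lp.coeFn_smul c⁻¹ g, hg] with x e1 e2
          rw [e1]
          simp only [Pi.smul_apply, smul_eq_mul, Pi.zero_apply]
          exact mul_nonneg (inv_nonneg.mpr hpos.le) e2
        have hone : ∫ x, (c⁻¹ • g : Lp ℝ 1 μ) x ∂μ = 1 := by
          rw [hIsmul]; exact inv_mul_cancel₀ hpos.ne'
        obtain ⟨e1, e2⟩ := h2 (c⁻¹ • g) hnn hone t ht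
        rw [hΦeq, hΦeq] at e1
        rw [hΨeq, hΨeq] at e2
        rw [_root_.map_smul, _root_.map_smul, _root_.map_smul, hIsmul, hIsmul] at e1
        rw [_root_.map_smul, _root_.map_smul, _root_.map_smul, _root_.map_smul,
          _root_.map_smul, hIsmul, hIsmul] at e2
        have hcne : c⁻¹ ≠ 0 := inv_ne_zero hpos.ne'
        exact ⟨mul_left_cancel₀ hcne e1, mul_left_cancel₀ hcne e2⟩
    intro g
    have hp := nn (Lp.posPart g) (hposnn g)
    have hn := nn (Lp.negPart g) (hnegnn g)
    constructor
    · conv_lhs => rw [← hdecomp g]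
      conv_rhs => rw [← hdecomp g]
      simp only [map_sub, hIsub]
      rw [hp.1, hn.1]
    · conv_lhs => rw [← hdecomp g]
      conv_rhs => rw [← hdecomp g]
      simp only [map_sub, hIsub]
      rw [hp.2, hn.2]
  -- key C : (iii) implies extended invariance
  have keyC : (∀ g : Lp ℝ 1 μ,
        Tendsto (fun t : ℝ => t⁻¹ * (∫ x, O x * U t g x ∂μ - ∫ x, O x * g x ∂μ))
          (𝓝[>] (0 : ℝ)) (𝓝 0) ∧
        Tendsto
          (fun t : ℝ => t⁻¹ * (∫ x, O x * O x * U t g x ∂μ - ∫ x, O x * O x * g x ∂μ))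
          (𝓝[>] (0 : ℝ)) (𝓝 0)) →
      ∀ t : ℝ, 0 ≤ t → ∀ g : Lp ℝ 1 μ,
        (∫ x, (MO (U t g) : X → ℝ) x ∂μ = ∫ x, (MO g : X → ℝ) x ∂μ ∧
         ∫ x, (MO (MO (U t g)) : X → ℝ) x ∂μ = ∫ x, (MO (MO g) : X → ℝ) x ∂μ) := by
    intro h3 t ht g
    have main : ∀ T : Lp ℝ 1 μ →L[ℝ] Lp ℝ 1 μ,
        (∀ h : Lp ℝ 1 μ, Tendsto (fun u : ℝ =>
            u⁻¹ * ((∫ x, (T (U u h) : X → ℝ) x ∂μ) - ∫ x, (T h : X → ℝ) x ∂μ))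
          (𝓝[>] (0:ℝ)) (𝓝 0)) →
        ∫ x, (T (U t g) : X → ℝ) x ∂μ = ∫ x, (T g : X → ℝ) x ∂μ := by
      intro T hT
      set f : ℝ → ℝ := fun s => ∫ x, (T (U s g) : X → ℝ) x ∂μ with hf
      have hfc : ContinuousOn f (Set.Icc 0 t) := by
        have hci : Continuous fun h : Lp ℝ 1 μ => ∫ x, (T h : X → ℝ) x ∂μ :=
          continuous_integral.comp T.continuous
        exact (hci.comp_continuousOn (hcont g)).mono Set.Icc_subset_Ici_self
      have hderiv : ∀ s ∈ Set.Ico (0:ℝ) t, HasDerivWithinAt f 0 (Set.Ici s) s := by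
        intro s hs
        rw [hasDerivWithinAt_iff_tendsto_slope, Set.Ici_sdiff_left]
        have hmap : Tendsto (fun u : ℝ => u - s) (𝓝[>] s) (𝓝[>] (0:ℝ)) := by
          apply tendsto_nhdsWithin_of_tendsto_nhds_of_eventually_within
          · have := ((continuous_sub_right s).tendsto s).mono_left
              (nhdsWithin_le_nhds (s := Set.Ioi s))
            simpa using this
          · filter_upwards [self_mem_nhdsWithin] with u hu
            simpa using sub_pos.mpr (Set.mem_Ioi.mp hu)
        have hts := (hT (U s g)).comp hmap
        refine Tendsto.congr' ?_ hts
        filter_upwards [self_mem_nhdsWithin] with u hu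
        have hu0 : (0:ℝ) < u - s := sub_pos.mpr hu
        have hcomp : U (u - s) (U s g) = U u g := by
          have e := hsemi (u - s) s hu0.le hs.1
          rw [show u - s + s = u by ring] at e
          rw [e]; rfl
        simp only [Function.comp_apply]
        rw [slope_def_field, div_eq_inv_mul, hcomp]
      have hconst := constant_of_has_deriv_right_zero hfc hderiv t (Set.right_mem_Icc.mpr ht)
      have hf0 : f 0 = ∫ x, (T g : X → ℝ) x ∂μ := by
        rw [hf]; simp [h0]
      rw [← hf0]; exact hconst
    constructor
    · apply main MO
      intro h
      have := (h3 h).1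
      refine this.congr ?_
      intro u
      rw [hΦeq, hΦeq]
    · apply main (MO.comp MO)
      intro h
      have := (h3 h).2
      refine this.congr ?_
      intro u
      simp only [ContinuousLinearMap.comp_apply]
      rw [hΨeq, hΨeq]
  -- the TFAE
  tfae_have 1 → 2 := by
    intro h1 g hg hg1 t ht
    constructor
    · rw [hΦeq, hΦeq, ← h1 t ht g]
      exact hUint t ht (MO g)
    · rw [hΨeq, hΨeq, ← h1 t ht g, ← h1 t ht (MO g)]
      exact hUint t ht (MO (MO g))
  tfae_have 2 → 3 := by
    intro h2 g
    have hP := keyB h2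
    constructor
    · refine Tendsto.congr' ?_ tendsto_const_nhds
      filter_upwards [self_mem_nhdsWithin] with u hu
      have := (hP u (le_of_lt hu) g).1
      rw [hΦeq, hΦeq, this]
      ring
    · refine Tendsto.congr' ?_ tendsto_const_nhds
      filter_upwards [self_mem_nhdsWithin] with u hu
      have := (hP u (le_of_lt hu) g).2
      rw [hΨeq, hΨeq, this]
      ring
  tfae_have 3 → 1 := by
    intro h3 t ht
    exact keyA t ht (keyC h3 t ht)
  tfae_finish
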